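/- Let R>0 and Γ>0. Then Ẽ_h(0,−2R) = 0 if and only if h = h₂ := (Γ/(4π))·log(2R). Moreover the function φ₁(r) := r·e^{−1/r²} is a strictly increasing bijection from (0,∞) onto (0,∞), so there is a unique r* > 0 with φ₁(r*) = 4R, and the point (0,−2R) is exactly the image of the McGehee point (r*, 3π/2), i.e. (0,−2R) = (φ₁(r*)·cos(3π/2), φ₁(r*)·sin(3π/2) + 2R). Hence for h = h₂ there is exactly one restpoint on the zero velocity manifold, located at (r*, 3π/2), and for h ≠ h₂ there are none. -/

import Mathlib

open Real

/-- `b(x,y) := 2R²·(x² + (y−2R)²)/(4R² + x² + y²)`. -/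
noncomputable def bfun (R x y : ℝ) : ℝ :=
  2 * R ^ 2 * (x ^ 2 + (y - 2 * R) ^ 2) / (4 * R ^ 2 + x ^ 2 + y ^ 2)

/-- `Ẽ_h(x,y) := h − (Γ/(8π))·log(b(x,y))`. -/
noncomputable def Etilde (R Γ h x y : ℝ) : ℝ :=
  h - Γ / (8 * π) * Real.log (bfun R x y)

/-- `φ₁(r) := r·e^{−1/r²}`. -/
noncomputable def phi1 (r : ℝ) : ℝ := r * Real.exp (-1 / r ^ 2)

lemma deriv_bfun_x (R : ℝ) (hR : 0 < R) (x y : ℝ) :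
    deriv (fun t => bfun R t y) x = 16*R^3*x*y/(4*R^2+x^2+y^2)^2 := by
  have hD : (0:ℝ) < 4*R^2+x^2+y^2 := by positivity
  have hsq : HasDerivAt (fun t : ℝ => t^2) (2*x) x := by
    simpa using hasDerivAt_pow 2 x
  have h1 : HasDerivAt (fun t : ℝ => 2*R^2*(t^2+(y-2*R)^2)) (2*R^2*(2*x)) x :=
    (hsq.add_const _).const_mul _
  have h2 : HasDerivAt (fun t : ℝ => 4*R^2+t^2+y^2) (2*x) x := by
    simpa using (hsq.const_add (4*R^2)).add_const (y^2)
  have hd : HasDerivAt (fun t => bfun R t y)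
      ((2*R^2*(2*x) * (4*R^2+x^2+y^2) - 2*R^2*(x^2+(y-2*R)^2) * (2*x)) / (4*R^2+x^2+y^2)^2) x := by
    simpa [bfun, Pi.div_def] using h1.div h2 hD.ne'
  rw [hd.deriv, div_eq_div_iff (by positivity) (by positivity)]
  ring

lemma deriv_bfun_y (R : ℝ) (hR : 0 < R) (x y : ℝ) :
    deriv (fun t => bfun R x t) y = 8*R^3*(y^2-x^2-4*R^2)/(4*R^2+x^2+y^2)^2 := by
  have hD : (0:ℝ) < 4*R^2+x^2+y^2 := by positivity
  have hsq2 : HasDerivAt (fun t : ℝ => (t-2*R)^2) (2*(y-2*R)) y := by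
    simpa [Pi.pow_def] using ((hasDerivAt_id y).sub_const (2*R)).pow 2
  have hsqy : HasDerivAt (fun t : ℝ => t^2) (2*y) y := by
    simpa using hasDerivAt_pow 2 y
  have h1 : HasDerivAt (fun t : ℝ => 2*R^2*(x^2+(t-2*R)^2)) (2*R^2*(2*(y-2*R))) y :=
    (hsq2.const_add _).const_mul _
  have h2 : HasDerivAt (fun t : ℝ => 4*R^2+x^2+t^2) (2*y) y := hsqy.const_add (4*R^2+x^2)
  have hd : HasDerivAt (fun t => bfun R x t)
      ((2*R^2*(2*(y-2*R)) * (4*R^2+x^2+y^2) - 2*R^2*(x^2+(y-2*R)^2) * (2*y)) / (4*R^2+x^2+y^2)^2) y := by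
    simpa [bfun, Pi.div_def] using h1.div h2 hD.ne'
  rw [hd.deriv, div_eq_div_iff (by positivity) (by positivity)]
  ring

lemma etilde_zero_iff (R Γ : ℝ) (hR : 0 < R) (hΓ : 0 < Γ) (h : ℝ) :
    Etilde R Γ h 0 (-(2*R)) = 0 ↔ h = Γ/(4*π)*Real.log (2*R) := by
  have hπ := Real.pi_pos
  have hb : bfun R 0 (-(2*R)) = (2*R)^2 := by
    unfold bfun
    rw [div_eq_iff (by positivity)]
    ring
  unfold Etilde
  rw [hb, Real.log_pow]
  have key : Γ / (8*π) * ((2:ℕ) * Real.log (2*R)) = Γ/(4*π) * Real.log (2*R) := by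
    push_cast
    field_simp
    ring
  rw [key, sub_eq_zero]

lemma phi1_pos {r : ℝ} (hr : 0 < r) : 0 < phi1 r :=
  mul_pos hr (Real.exp_pos _)

lemma phi1_mono : StrictMonoOn phi1 (Set.Ioi 0) := by
  intro a ha b hb hab
  simp only [Set.mem_Ioi] at ha hb
  have h1 : -1/a^2 < -1/b^2 := by
    have : 1/b^2 < 1/a^2 :=
      one_div_lt_one_div_of_lt (by positivity) (by nlinarith)
    rw [neg_div, neg_div]
    exact neg_lt_neg this
  calc phi1 a = a * Real.exp (-1/a^2) := rfl
    _ < b * Real.exp (-1/a^2) := by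
        exact mul_lt_mul_of_pos_right hab (Real.exp_pos _)
    _ < b * Real.exp (-1/b^2) := by
        exact mul_lt_mul_of_pos_left (Real.exp_lt_exp.2 h1) hb

lemma phi1_surj : Set.SurjOn phi1 (Set.Ioi 0) (Set.Ioi 0) := by
  intro v hv
  simp only [Set.mem_Ioi] at hv
  set a := v/2 with ha_def
  set b := max 1 (Real.exp 1 * v) with hb_def
  have ha : 0 < a := by positivity
  have hb1 : (1:ℝ) ≤ b := le_max_left _ _
  have hab : a ≤ b := by
    have h2 : Real.exp 1 * v ≤ b := le_max_right _ _
    have h3 : (1:ℝ) ≤ Real.exp 1 := by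
      have := Real.add_one_le_exp (1:ℝ); linarith
    nlinarith
  have hcont : ContinuousOn phi1 (Set.Icc a b) := by
    intro r hr
    have hrne : r ≠ 0 := by
      have := hr.1; intro h0; rw [h0] at this; linarith
    have : ContinuousAt phi1 r := by
      apply continuousAt_id.mul
      exact (Real.continuous_exp.continuousAt).comp
        (continuousAt_const.div (continuousAt_id.pow 2) (pow_ne_zero 2 hrne))
    exact this.continuousWithinAt
  have hmem : v ∈ Set.Icc (phi1 a) (phi1 b) := by
    constructor
    · have : Real.exp (-1/a^2) ≤ 1 := by
        rw [Real.exp_le_one_iff]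
        have : (0:ℝ) < a^2 := by positivity
        rw [neg_div]
        simp [div_nonneg, le_of_lt this]
      calc phi1 a ≤ a * 1 := mul_le_mul_of_nonneg_left this (le_of_lt ha)
        _ = v/2 := by rw [mul_one]
        _ ≤ v := by linarith
    · have hbpos : (0:ℝ) < b := lt_of_lt_of_le one_pos hb1
      have h4 : Real.exp (-1) ≤ Real.exp (-1/b^2) := by
        apply Real.exp_le_exp.2
        have hb2 : (1:ℝ) ≤ b^2 := by nlinarith
        have : 1/b^2 ≤ 1 := by
          rw [div_le_one (by positivity)]; exact hb2
        rw [neg_div]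
        linarith
      have h5 : Real.exp 1 * v ≤ b := le_max_right _ _
      have : v = (Real.exp 1 * v) * Real.exp (-1) := by
        rw [mul_comm (Real.exp 1) v, mul_assoc, ← Real.exp_add]
        simp
      calc v = (Real.exp 1 * v) * Real.exp (-1) := this
        _ ≤ b * Real.exp (-1) := by
            apply mul_le_mul_of_nonneg_right h5 (le_of_lt (Real.exp_pos _))
        _ ≤ b * Real.exp (-1/b^2) := mul_le_mul_of_nonneg_left h4 (le_of_lt hbpos)
        _ = phi1 b := rfl
  obtain ⟨r, hr, hrv⟩ := intermediate_value_Icc hab hcont hmem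
  exact ⟨r, Set.mem_Ioi.2 (lt_of_lt_of_le ha hr.1), hrv⟩

/-- `Ẽ_h(0,−2R) = 0` iff `h = h₂ := (Γ/(4π))·log(2R)`; `φ₁` is a strictly
increasing bijection of `(0,∞)` onto itself, so there is a unique `r* > 0` with
`φ₁(r*) = 4R`, and `(0,−2R)` is the image of the McGehee point `(r*, 3π/2)`. Hence
(restpoints on the zero velocity manifold being the points of `ℝ² ∖ {(0,2R)}` where
`Ẽ_h = 0` and the gradient of `b` vanishes) for `h = h₂` there is exactly one restpoint
on the zero velocity manifold, located at `(r*, 3π/2)`, and for `h ≠ h₂` there are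
none. -/
theorem restpoint_on_zero_velocity_manifold (R Γ : ℝ) (hR : 0 < R) (hΓ : 0 < Γ) :
    (∀ h : ℝ, Etilde R Γ h 0 (-(2 * R)) = 0 ↔ h = Γ / (4 * π) * Real.log (2 * R)) ∧
    StrictMonoOn phi1 (Set.Ioi 0) ∧
    Set.BijOn phi1 (Set.Ioi 0) (Set.Ioi 0) ∧
    (∃! r : ℝ, 0 < r ∧ phi1 r = 4 * R) ∧
    (∀ r : ℝ, 0 < r → phi1 r = 4 * R →
      ((0 : ℝ), -(2 * R)) =
        (phi1 r * Real.cos (3 * π / 2), phi1 r * Real.sin (3 * π / 2) + 2 * R)) ∧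
    (∀ h x y : ℝ, (x, y) ≠ ((0 : ℝ), 2 * R) →
      ((Etilde R Γ h x y = 0 ∧ deriv (fun t => bfun R t y) x = 0 ∧
          deriv (fun t => bfun R x t) y = 0) ↔
        (h = Γ / (4 * π) * Real.log (2 * R) ∧ (x, y) = ((0 : ℝ), -(2 * R))))) := by
  have hbij : Set.BijOn phi1 (Set.Ioi 0) (Set.Ioi 0) :=
    ⟨fun r hr => Set.mem_Ioi.2 (phi1_pos (Set.mem_Ioi.1 hr)),
     phi1_mono.injOn, phi1_surj⟩
  refine ⟨fun h => etilde_zero_iff R Γ hR hΓ h, phi1_mono, hbij, ?_, ?_, ?_⟩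
  · obtain ⟨r, hr, hrv⟩ := phi1_surj (Set.mem_Ioi.2 (by positivity : (0:ℝ) < 4*R))
    refine ⟨r, ⟨Set.mem_Ioi.1 hr, hrv⟩, ?_⟩
    intro s ⟨hs, hsv⟩
    exact phi1_mono.injOn (Set.mem_Ioi.2 hs) hr (by rw [hsv, hrv])
  · intro r hr hrv
    have hc : Real.cos (3 * π / 2) = 0 := by
      rw [show 3*π/2 = π + π/2 by ring, Real.cos_add]
      simp
    have hs : Real.sin (3 * π / 2) = -1 := by
      rw [show 3*π/2 = π + π/2 by ring, Real.sin_add]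
      simp
    rw [hc, hs, hrv, Prod.mk.injEq]
    constructor <;> ring
  · intro h x y hne
    have hD : (0:ℝ) < 4*R^2+x^2+y^2 := by positivity
    constructor
    · rintro ⟨hE, hdx, hdy⟩
      rw [deriv_bfun_x R hR x y, div_eq_zero_iff] at hdx
      rw [deriv_bfun_y R hR x y, div_eq_zero_iff] at hdy
      have hxy : x * y = 0 := by
        rcases hdx with h1 | h1
        · have h2 : (16*R^3)*(x*y) = 0 := by linear_combination h1
          rcases mul_eq_zero.1 h2 with h3 | h3
          · exact absurd h3 (by positivity)
          · exact h3
        · exact absurd h1 (by positivity)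
      have hcirc : y^2 - x^2 - 4*R^2 = 0 := by
        rcases hdy with h1 | h1
        · have h2 : (8*R^3)*(y^2 - x^2 - 4*R^2) = 0 := by linear_combination h1
          rcases mul_eq_zero.1 h2 with h3 | h3
          · exact absurd h3 (by positivity)
          · exact h3
        · exact absurd h1 (by positivity)
      rcases mul_eq_zero.1 hxy with hx0 | hy0
      · subst hx0
        have hfac : (y - 2*R) * (y + 2*R) = 0 := by nlinarith
        rcases mul_eq_zero.1 hfac with h1 | h1
        · exact absurd (by rw [show y = 2*R by linarith]) hne
        · have hy : y = -(2*R) := by linarith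
          subst hy
          exact ⟨(etilde_zero_iff R Γ hR hΓ h).1 hE, rfl⟩
      · subst hy0
        nlinarith
    · rintro ⟨hh, hxy⟩
      rw [Prod.ext_iff] at hxy
      obtain ⟨hx, hy⟩ := hxy
      simp only at hx hy
      subst hx; subst hy
      refine ⟨(etilde_zero_iff R Γ hR hΓ h).2 hh, ?_, ?_⟩
      · rw [deriv_bfun_x R hR]; simp
      · rw [deriv_bfun_y R hR,
          show ((-(2*R)):ℝ)^2 - 0^2 - 4*R^2 = 0 by ring, mul_zero, zero_div]
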